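/- If [a + m₁] = [a + m₂] where a ∈ (ℤ/2ⁿℤ)^{2ν+δ} has a unit coordinate among the first 2ν entries and m₁, m₂ ∈ (2ℤ/2ⁿℤ)^{2ν+δ}, then a + m₁ = (1 + μ)(a + m₂) for some μ ∈ 2·(ℤ/2ⁿℤ). -/

import Mathlib

namespace Ortho
open Matrix

abbrev Vec (n ν δ : ℕ) := Fin (2*ν+δ) → ZMod (2^n)

/-- The orthogonal form matrix `G_{2ν+δ,Δ}`. -/
def Gmat (n ν δ : ℕ) (z : ZMod (2^n)) : Matrix (Fin (2*ν+δ)) (Fin (2*ν+δ)) (ZMod (2^n)) :=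
  Matrix.of fun i j =>
    if i.val < ν ∧ j.val = i.val + ν then 1
    else if 2*ν ≤ i.val ∧ i.val = j.val then (if δ = 2 then z else 1)
    else if i.val = 2*ν ∧ j.val = 2*ν+1 then 1
    else 0

/-- Representatives of vertices: vectors with a unit coordinate that are isotropic. -/
abbrev VertexRep (n ν δ : ℕ) (z : ZMod (2^n)) :=
  {a : Vec n ν δ // (∃ i, IsUnit (a i)) ∧ a ⬝ᵥ (Gmat n ν δ z).mulVec a = 0}

instance vsetoid (n ν δ : ℕ) (z : ZMod (2^n)) : Setoid (VertexRep n ν δ z) where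
  r a b := ∃ u : (ZMod (2^n))ˣ, (a : Vec n ν δ) = (u : ZMod (2^n)) • (b : Vec n ν δ)
  iseqv := by
    constructor
    · intro a; exact ⟨1, by simp⟩
    · rintro a b ⟨u, h⟩
      exact ⟨u⁻¹, by rw [h, smul_smul, Units.inv_mul, one_smul]⟩
    · rintro a b c ⟨u, h1⟩ ⟨v, h2⟩
      exact ⟨u * v, by rw [h1, h2, smul_smul, Units.val_mul]⟩

/-- Vertices of the orthogonal graph: classes of vectors under unit scaling. -/
def Vertex (n ν δ : ℕ) (z : ZMod (2^n)) := Quotient (vsetoid n ν δ z)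

def adjAux (n ν δ : ℕ) (z : ZMod (2^n)) (A B : Vertex n ν δ z) : Prop :=
  ∃ a b : VertexRep n ν δ z, (⟦a⟧ : Vertex n ν δ z) = A ∧ (⟦b⟧ : Vertex n ν δ z) = B ∧
    IsUnit ((a : Vec n ν δ) ⬝ᵥ (Gmat n ν δ z + (Gmat n ν δ z)ᵀ).mulVec (b : Vec n ν δ))

/-- The orthogonal graph modulo `2^n`. -/
def OGraph (n ν δ : ℕ) (z : ZMod (2^n)) : SimpleGraph (Vertex n ν δ z) where
  Adj A B := A ≠ B ∧ (adjAux n ν δ z A B ∨ adjAux n ν δ z B A)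
  symm := by constructor; rintro A B ⟨h1, h2⟩; exact ⟨Ne.symm h1, Or.symm h2⟩
  loopless := by constructor; rintro A ⟨h, -⟩; exact h rfl

end Ortho


namespace Ortho
open Matrix

theorem class_eq_implies_one_add_even (n ν δ : ℕ) (a m₁ m₂ : Vec n ν δ)
    (ha : ∃ j : Fin (2*ν+δ), j.val < 2*ν ∧ IsUnit (a j))
    (hm₁ : ∀ i, ∃ y, m₁ i = 2*y) (hm₂ : ∀ i, ∃ y, m₂ i = 2*y)
    (h : ∃ u : (ZMod (2^n))ˣ, a + m₁ = (u : ZMod (2^n)) • (a + m₂)) :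
    ∃ μ : ZMod (2^n), (∃ y, μ = 2*y) ∧ a + m₁ = (1 + μ) • (a + m₂) := by
  obtain ⟨u, hu⟩ := h
  obtain ⟨j, hjlt, haj⟩ := ha
  obtain ⟨v, hv⟩ := haj
  obtain ⟨y₁, hy₁⟩ := hm₁ j
  obtain ⟨y₂, hy₂⟩ := hm₂ j
  refine ⟨(u : ZMod (2^n)) - 1, ?_, ?_⟩
  · have hj' : a j + m₁ j = (u : ZMod (2^n)) * (a j + m₂ j) := by
      have := congrFun hu j
      simpa using this
    have hd : ((u:ZMod (2^n)) - 1) * a j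
        = 2 * (y₁ - y₂ - ((u:ZMod (2^n)) - 1) * y₂) := by
      rw [hy₁, hy₂] at hj'
      linear_combination -hj'
    refine ⟨(y₁ - y₂ - ((u:ZMod (2^n)) - 1) * y₂) * (v⁻¹ : (ZMod (2^n))ˣ), ?_⟩
    have h1 : a j * ((v⁻¹ : (ZMod (2^n))ˣ) : ZMod (2^n)) = 1 := by
      rw [← hv]; exact v.mul_inv
    calc (u:ZMod (2^n)) - 1 = ((u:ZMod (2^n)) - 1) * (a j * ((v⁻¹ : (ZMod (2^n))ˣ) : ZMod (2^n))) := by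
          rw [h1, mul_one]
      _ = (((u:ZMod (2^n)) - 1) * a j) * ((v⁻¹ : (ZMod (2^n))ˣ) : ZMod (2^n)) := by ring
      _ = 2 * ((y₁ - y₂ - ((u:ZMod (2^n)) - 1) * y₂) * ((v⁻¹ : (ZMod (2^n))ˣ) : ZMod (2^n))) := by
          rw [hd]; ring
  · have : (1 : ZMod (2^n)) + ((u:ZMod (2^n)) - 1) = u := by ring
    rw [this]; exact hu

end Ortho
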